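/- Under the setting of the FCD update (f convex with coordinate-wise Lipschitz gradient constants cᵢ, h convex separable, g > 0, θ > 0), define α = [f(x) + ∇ᵢf(x)η̄ + ((cᵢ+θ)/2)η̄² + h(x+η̄eᵢ)]/g(x+η̄eᵢ) where x⁺ = x + η̄eᵢ. Then F(x⁺) ≤ α ≤ F(x⁺) + σ·(F(x) − F(x⁺)) where σ = (cᵢ + θ)/θ, provided the sufficient decrease (θ/(2g(x⁺)))η̄² ≤ F(x) − F(x⁺) holds. -/

import Mathlib

theorem fcd_alpha_sandwich {n : ℕ}
    (f h g : (Fin n → ℝ) → ℝ) (f' : (Fin n → ℝ) → Fin n → ℝ)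
    (c : Fin n → ℝ) (h' : Fin n → ℝ → ℝ) (θ : ℝ) (hθ : 0 < θ)
    (hfconv : ConvexOn ℝ Set.univ f)
    (hgrad : ∀ a b : Fin n → ℝ, f a + ∑ j, f' a j * (b j - a j) ≤ f b)
    (hlip : ∀ (x : Fin n → ℝ) (η : ℝ) (i : Fin n),
      f (x + η • (Pi.single i (1 : ℝ) : Fin n → ℝ)) ≤
        f x + f' x i * η + c i / 2 * η ^ 2)
    (hhconv : ∀ i, ConvexOn ℝ Set.univ (h' i))
    (hsep : ∀ x, h x = ∑ i, h' i (x i))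
    (hgpos : ∀ x, 0 < g x)
    (x : Fin n → ℝ) (i : Fin n) (ηbar : ℝ)
    (hdec : θ / (2 * g (x + ηbar • (Pi.single i (1 : ℝ) : Fin n → ℝ))) * ηbar ^ 2 ≤
      (f x + h x) / g x -
        (f (x + ηbar • (Pi.single i (1 : ℝ) : Fin n → ℝ)) +
            h (x + ηbar • (Pi.single i (1 : ℝ) : Fin n → ℝ))) /
          g (x + ηbar • (Pi.single i (1 : ℝ) : Fin n → ℝ))) :
    (f (x + ηbar • (Pi.single i (1 : ℝ) : Fin n → ℝ)) +
          h (x + ηbar • (Pi.single i (1 : ℝ) : Fin n → ℝ))) /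
        g (x + ηbar • (Pi.single i (1 : ℝ) : Fin n → ℝ)) ≤
      (f x + f' x i * ηbar + (c i + θ) / 2 * ηbar ^ 2 +
          h (x + ηbar • (Pi.single i (1 : ℝ) : Fin n → ℝ))) /
        g (x + ηbar • (Pi.single i (1 : ℝ) : Fin n → ℝ)) ∧
    (f x + f' x i * ηbar + (c i + θ) / 2 * ηbar ^ 2 +
          h (x + ηbar • (Pi.single i (1 : ℝ) : Fin n → ℝ))) /
        g (x + ηbar • (Pi.single i (1 : ℝ) : Fin n → ℝ)) ≤
      (f (x + ηbar • (Pi.single i (1 : ℝ) : Fin n → ℝ)) +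
            h (x + ηbar • (Pi.single i (1 : ℝ) : Fin n → ℝ))) /
          g (x + ηbar • (Pi.single i (1 : ℝ) : Fin n → ℝ)) +
        ((c i + θ) / θ) *
          ((f x + h x) / g x -
            (f (x + ηbar • (Pi.single i (1 : ℝ) : Fin n → ℝ)) +
                h (x + ηbar • (Pi.single i (1 : ℝ) : Fin n → ℝ))) /
              g (x + ηbar • (Pi.single i (1 : ℝ) : Fin n → ℝ))) := by
  set xp := x + ηbar • (Pi.single i (1 : ℝ) : Fin n → ℝ) with hxp
  have hG : 0 < g xp := hgpos xp
  -- gradient sum computation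
  have hsum : ∀ η : ℝ,
      (∑ j, f' x j * ((x + η • (Pi.single i (1 : ℝ) : Fin n → ℝ)) j - x j)) = f' x i * η := by
    intro η
    have : ∀ j, f' x j * ((x + η • (Pi.single i (1 : ℝ) : Fin n → ℝ)) j - x j)
        = if j = i then f' x i * η else 0 := by
      intro j
      by_cases hj : j = i <;> simp [hj, Pi.single_apply, mul_comm]
    rw [Finset.sum_congr rfl fun j _ => this j]
    simp
  -- convexity lower bound: f x + f' x i * η ≤ f (x + η • e i)
  have hkey : ∀ η : ℝ, f x + f' x i * η ≤ f (x + η • (Pi.single i (1 : ℝ) : Fin n → ℝ)) := by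
    intro η
    have := hgrad x (x + η • (Pi.single i (1 : ℝ) : Fin n → ℝ))
    rwa [hsum η] at this
  -- c i ≥ 0
  have hc : 0 ≤ c i := by
    have h1 := hkey 1
    have h2 := hlip x 1 i
    nlinarith
  have hη2 : (0:ℝ) ≤ ηbar ^ 2 := sq_nonneg _
  constructor
  · rw [div_le_div_iff_of_pos_right hG]
    have := hlip x ηbar i
    rw [← hxp] at this
    nlinarith
  · have h1 : (f x + f' x i * ηbar + (c i + θ) / 2 * ηbar ^ 2 + h xp) / g xp ≤
        (f xp + h xp) / g xp + ((c i + θ) / 2 * ηbar ^ 2) / g xp := by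
      rw [← add_div]
      rw [div_le_div_iff_of_pos_right hG]
      have := hkey ηbar
      rw [← hxp] at this
      nlinarith
    have h2 : ((c i + θ) / 2 * ηbar ^ 2) / g xp ≤
        ((c i + θ) / θ) * ((f x + h x) / g x - (f xp + h xp) / g xp) := by
      have hσ : 0 ≤ (c i + θ) / θ := by positivity
      have h3 := mul_le_mul_of_nonneg_left hdec hσ
      have heq : ((c i + θ) / θ) * (θ / (2 * g xp) * ηbar ^ 2)
          = ((c i + θ) / 2 * ηbar ^ 2) / g xp := by
        field_simp
      linarith [heq ▸ h3]
    linarith
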